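/- Let G be a strictly chordal graph and S a minimal vertex separator of G. Then any two vertices of S are true twins in G. -/

import Mathlib

open SimpleGraph Matrix

/-- `S` separates `u` and `v` in `G`: every walk from `u` to `v` meets `S`. -/
def Separates {V : Type*} (G : SimpleGraph V) (u v : V) (S : Set V) : Prop :=
  ∀ p : G.Walk u v, ∃ x ∈ p.support, x ∈ S

/-- `S` is a minimal `uv`-separator. -/
def IsMinimalUVSeparator {V : Type*} (G : SimpleGraph V) (u v : V) (S : Set V) : Prop :=
  u ≠ v ∧ ¬ G.Adj u v ∧ u ∉ S ∧ v ∉ S ∧ Separates G u v S ∧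
    ∀ S' ⊂ S, ¬ Separates G u v S'

/-- `S` is a minimal vertex separator: a minimal `uv`-separator for some non-adjacent pair. -/
def IsMinimalVertexSeparator {V : Type*} (G : SimpleGraph V) (S : Set V) : Prop :=
  ∃ u v, IsMinimalUVSeparator G u v S

/-- `G` is chordal: it has no induced cycle of length at least 4. -/
def Chordal {V : Type*} (G : SimpleGraph V) : Prop :=
  ∀ n, 4 ≤ n → ¬ ∃ f : Fin n ↪ V, ∀ a b, (SimpleGraph.cycleGraph n).Adj a b ↔ G.Adj (f a) (f b)

/-- `G` is strictly chordal: chordal with pairwise disjoint minimal vertex separators. -/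
def StrictlyChordal {V : Type*} (G : SimpleGraph V) : Prop :=
  Chordal G ∧ ∀ S S' : Set V, IsMinimalVertexSeparator G S →
    IsMinimalVertexSeparator G S' → S ≠ S' → Disjoint S S'

namespace StrictlyChordalProof

variable {V : Type*} {G : SimpleGraph V}

/-- `a` is reachable from `r` by a walk avoiding `A` entirely. -/
def Avoid (G : SimpleGraph V) (r : V) (A : Set V) (a : V) : Prop :=
  ∃ p : G.Walk r a, ∀ w ∈ p.support, w ∉ A

lemma Avoid.notMem {r a : V} {A : Set V} (h : Avoid G r A a) : a ∉ A := by
  obtain ⟨p, hp⟩ := h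
  exact hp a p.end_mem_support

lemma Avoid.start_notMem {r a : V} {A : Set V} (h : Avoid G r A a) : r ∉ A := by
  obtain ⟨p, hp⟩ := h
  exact hp r p.start_mem_support

lemma avoid_refl {r : V} {A : Set V} (h : r ∉ A) : Avoid G r A r :=
  ⟨Walk.nil, by simpa using h⟩

lemma Avoid.cons {r a b : V} {A : Set V} (hr : r ∉ A) (h : G.Adj r a) (hab : Avoid G a A b) :
    Avoid G r A b := by
  obtain ⟨p, hp⟩ := hab
  refine ⟨Walk.cons h p, ?_⟩
  intro w hw
  rw [Walk.support_cons, List.mem_cons] at hw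
  rcases hw with rfl | hw
  · exact hr
  · exact hp w hw

lemma avoid_of_mem_support {r a w : V} {A : Set V} {p : G.Walk r a}
    (hp : ∀ w ∈ p.support, w ∉ A) (hw : w ∈ p.support) : Avoid G r A w := by
  classical
  exact ⟨p.takeUntil w hw, fun z hz => hp z (p.support_takeUntil_subset hw hz)⟩

/-- First-hit lemma: a walk from outside `A` that meets `A` has a first vertex `d` of `A`,
whose predecessor `c` is reachable avoiding `A`. -/
lemma exists_boundary {A : Set V} :
    ∀ {a b : V} (p : G.Walk a b), a ∉ A → (∃ w ∈ p.support, w ∈ A) →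
    ∃ c d, G.Adj c d ∧ d ∈ A ∧ d ∈ p.support ∧ Avoid G a A c := by
  intro a b p
  induction p with
  | nil =>
    intro ha hw
    obtain ⟨w, hw1, hw2⟩ := hw
    simp only [Walk.support_nil, List.mem_singleton] at hw1
    exact absurd (hw1 ▸ hw2) ha
  | @cons a c b h q ih =>
    intro ha hw
    by_cases hcA : c ∈ A
    · exact ⟨a, c, h, hcA, by simp [Walk.support_cons, q.start_mem_support],
        avoid_refl ha⟩
    · obtain ⟨w, hw1, hw2⟩ := hw
      rw [Walk.support_cons, List.mem_cons] at hw1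
      rcases hw1 with rfl | hw1
      · exact absurd hw2 ha
      obtain ⟨c', d, hcd, hdA, hdsup, hav⟩ := ih hcA ⟨w, hw1, hw2⟩
      exact ⟨c', d, hcd, hdA, by simp [Walk.support_cons, hdsup], hav.cons ha h⟩

/-- The minimal separator contained in `N(y)` determined by the component of `z`. -/
lemma nbhd_minimal_separator {z y : V} (hzy : z ≠ y) (hnadj : ¬ G.Adj z y) :
    IsMinimalUVSeparator G z y
      {w | G.Adj y w ∧ ∃ c, Avoid G z (G.neighborSet y ∪ {y}) c ∧ G.Adj c w} := by
  set A : Set V := G.neighborSet y ∪ {y} with hA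
  set T : Set V := {w | G.Adj y w ∧ ∃ c, Avoid G z A c ∧ G.Adj c w} with hT
  have hzA : z ∉ A := by
    intro h
    rcases h with h | h
    · exact hnadj (SimpleGraph.mem_neighborSet _ _ _ |>.mp h).symm
    · exact hzy h
  have hTA : T ⊆ A := fun w hw => Or.inl hw.1
  have hyT : y ∉ T := fun h => G.irrefl h.1
  have hzT : z ∉ T := fun h => hzA (hTA h)
  have hsep : Separates G z y T := by
    intro p
    obtain ⟨c, d, hcd, hdA, hdsup, hav⟩ :=
      exists_boundary p hzA ⟨y, p.end_mem_support, Or.inr rfl⟩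
    rcases hdA with hdN | hdy
    · exact ⟨d, hdsup, hdN, c, hav, hcd⟩
    · exfalso
      rw [Set.mem_singleton_iff] at hdy
      subst hdy
      exact hav.notMem (Or.inl hcd.symm)
  refine ⟨hzy, hnadj, hzT, hyT, hsep, ?_⟩
  intro T' hT' hsep'
  obtain ⟨w, hwT, hwT'⟩ := Set.exists_of_ssubset hT'
  obtain ⟨hyw, c, hav, hcw⟩ := hwT
  obtain ⟨q, hq⟩ := hav
  obtain ⟨t, ht1, ht2⟩ := hsep' ((q.concat hcw).concat hyw.symm)
  have hT'T : T' ⊆ T := hT'.subset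
  rw [Walk.support_concat, Walk.support_concat] at ht1
  simp only [List.concat_eq_append, List.mem_append, List.mem_singleton] at ht1
  rcases ht1 with (ht1 | rfl) | rfl
  · exact hq t ht1 (hTA (hT'T ht2))
  · exact hwT' ht2
  · exact hyT (hT'T ht2)

/-- split a walk at index `i`. -/
lemma exists_split : ∀ {a b : V} (p : G.Walk a b) (i : ℕ), i ≤ p.length →
    ∃ (q : G.Walk a (p.getVert i)) (r : G.Walk (p.getVert i) b),
      q.length = i ∧ p = q.append r := by
  intro a b p
  induction p with
  | nil =>
    intro i hi
    simp only [Walk.length_nil, Nat.le_zero] at hi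
    subst hi
    exact ⟨.nil, .nil, rfl, rfl⟩
  | @cons a c b h q ih =>
    intro i hi
    match i with
    | 0 => exact ⟨.nil, Walk.cons h q, rfl, rfl⟩
    | (i+1) =>
      obtain ⟨q1, r1, hl, he⟩ := ih i (by simpa using hi)
      exact ⟨Walk.cons h q1, r1, by simp [hl], by exact ((Walk.cons_append h q1 r1).trans (congrArg (Walk.cons h) he.symm)).symm⟩

lemma getVert_mem_support {a b : V} (p : G.Walk a b) (i : ℕ) :
    p.getVert i ∈ p.support := by
  by_cases hi : i ≤ p.length
  · exact Walk.mem_support_iff_exists_getVert.mpr ⟨i, rfl, hi⟩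
  · rw [p.getVert_of_length_le (by omega)]
    exact p.end_mem_support

lemma getVert_injective : ∀ {a b : V} {p : G.Walk a b}, p.IsPath → ∀ i j : ℕ,
    i ≤ p.length → j ≤ p.length → p.getVert i = p.getVert j → i = j := by
  intro a b p
  induction p with
  | nil => intro _ i j hi hj _; simp only [Walk.length_nil, Nat.le_zero] at hi hj; omega
  | @cons a c b h q ih =>
    intro hp i j hi hj hij
    rw [Walk.cons_isPath_iff] at hp
    match i, j with
    | 0, 0 => rfl
    | 0, (j+1) =>
      exfalso
      rw [Walk.getVert_zero, Walk.getVert_cons_succ] at hij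
      have hm : q.getVert j ∈ q.support :=
        Walk.mem_support_iff_exists_getVert.mpr ⟨j, rfl, by simpa using hj⟩
      exact hp.2 (hij ▸ hm)
    | (i+1), 0 =>
      exfalso
      rw [Walk.getVert_zero, Walk.getVert_cons_succ] at hij
      have hm : q.getVert i ∈ q.support :=
        Walk.mem_support_iff_exists_getVert.mpr ⟨i, rfl, by simpa using hi⟩
      exact hp.2 (hij ▸ hm)
    | (i+1), (j+1) =>
      rw [Walk.getVert_cons_succ, Walk.getVert_cons_succ] at hij
      have := ih hp.1 i j (by simpa using hi) (by simpa using hj) hij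
      omega

lemma mem_support_append_right {a b c : V} (q : G.Walk a b) (r : G.Walk b c) {w : V}
    (hw : w ∈ r.support) : w ∈ (q.append r).support := by
  rw [Walk.support_append, List.mem_append]
  rcases List.mem_cons.mp ((Walk.support_eq_cons r) ▸ hw) with rfl | h
  · exact Or.inl q.end_mem_support
  · exact Or.inr h

/-- Among walks all of whose support satisfies `P`, there is a shortest one; it is an
induced path. -/
lemma exists_shortest {x y : V} {P : V → Prop}
    (hex : ∃ p : G.Walk x y, ∀ w ∈ p.support, P w) :
    ∃ p : G.Walk x y, p.IsPath ∧ (∀ w ∈ p.support, P w) ∧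
      ∀ i j : ℕ, i + 1 < j → j ≤ p.length → ¬ G.Adj (p.getVert i) (p.getVert j) := by
  classical
  set A : Set ℕ := {m | ∃ p : G.Walk x y, (∀ w ∈ p.support, P w) ∧ p.length = m} with hAdef
  have hAne : A.Nonempty := by
    obtain ⟨p, hp⟩ := hex
    exact ⟨p.length, p, hp, rfl⟩
  obtain ⟨p0, hp0, hlen0⟩ := Nat.sInf_mem hAne
  set p := p0.bypass with hpdef
  have hpgood : ∀ w ∈ p.support, P w := fun w hw => hp0 w (p0.support_bypass_subset hw)
  have hplen : p.length = sInf A := by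
    refine le_antisymm (hlen0 ▸ p0.length_bypass_le) (Nat.sInf_le ⟨p, hpgood, rfl⟩)
  refine ⟨p, p0.bypass_isPath, hpgood, ?_⟩
  intro i j hij hj hadj
  obtain ⟨q, r, hql, hqr⟩ := exists_split p i (by omega)
  have hrlen : q.length + r.length = p.length := by
    have h := congrArg Walk.length hqr
    rw [Walk.length_append] at h
    omega
  have hrj : r.getVert (j - i) = p.getVert j := by
    have h := congrArg (fun (w : G.Walk x y) => w.getVert j) hqr
    simp only [Walk.getVert_append, hql] at h
    rw [if_neg (by omega)] at h
    exact h.symm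
  obtain ⟨r1, r2, hr1l, hr12⟩ := exists_split r (j - i) (by omega)
  -- the shortcut walk
  set W : G.Walk x y := q.append (Walk.cons hadj (r2.copy hrj rfl)) with hW
  have hWlen : W.length < p.length := by
    rw [hW, Walk.length_append, Walk.length_cons, Walk.length_copy]
    have h := congrArg Walk.length hr12
    rw [Walk.length_append] at h
    omega
  have hWsup : ∀ w ∈ W.support, w ∈ p.support := by
    intro w hw
    rw [hW, Walk.support_append, List.mem_append] at hw
    rcases hw with hw | hw
    · rw [hqr, Walk.support_append, List.mem_append]; exact Or.inl hw
    · have hw' : w ∈ (Walk.cons hadj (r2.copy hrj rfl)).support := List.mem_of_mem_tail hw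
      rw [Walk.support_cons, List.mem_cons] at hw'
      rcases hw' with rfl | hw'
      · exact getVert_mem_support p i
      · rw [Walk.support_copy] at hw'
        have h2 : w ∈ r.support := by
          rw [hr12]; exact mem_support_append_right _ _ hw'
        rw [hqr]; exact mem_support_append_right _ _ h2
  have : sInf A ≤ W.length := Nat.sInf_le ⟨W, fun w hw => hpgood w (hWsup w hw), rfl⟩
  omega

lemma fin_sub_val_one {n : ℕ} (hn : 2 ≤ n) (a b : Fin n) :
    (a - b).val = 1 ↔ (a.val = b.val + 1 ∨ (b.val = n - 1 ∧ a.val = 0)) := by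
  rcases a with ⟨a, ha⟩; rcases b with ⟨b, hb⟩
  rw [Fin.sub_def]
  simp only
  by_cases h : (n - b) + a < n
  · rw [Nat.mod_eq_of_lt h]; omega
  · rw [Nat.mod_eq_sub_mod (by omega), Nat.mod_eq_of_lt (by omega)]; omega

/-- Minimal separators in a chordal graph are cliques. -/
lemma clique_of_minsep (hch : Chordal G) {u v : V} {S : Set V}
    (hS : IsMinimalUVSeparator G u v S) {x y : V} (hx : x ∈ S) (hy : y ∈ S) (hxy : x ≠ y) :
    G.Adj x y := by
  obtain ⟨huv, hnuv, huS, hvS, hsep, hmin⟩ := hS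
  by_contra hxy'
  -- every vertex of S has a neighbor in the u-side and in the v-side
  have key : ∀ z ∈ S, (∃ c, G.Adj z c ∧ Avoid G u S c) ∧ (∃ d, G.Adj z d ∧ Avoid G v S d) := by
    intro z hz
    have hss : S \ {z} ⊂ S := by
      refine Set.ssubset_iff_subset_ne.mpr ⟨Set.diff_subset, fun h => ?_⟩
      have hzz : z ∉ S \ {z} := fun hc => hc.2 rfl
      rw [h] at hzz
      exact hzz hz
    have hns := hmin _ hss
    simp only [Separates, not_forall] at hns
    obtain ⟨p, hp⟩ := hns
    push_neg at hp
    constructor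
    · obtain ⟨c, d, hcd, hdS, hdsup, hav⟩ := exists_boundary p huS (hsep p)
      have hdz : d = z := by
        by_contra hd
        exact hp d hdsup ⟨hdS, hd⟩
      exact ⟨c, (hdz ▸ hcd).symm, hav⟩
    · have hrev : ∃ w ∈ p.reverse.support, w ∈ S := by
        obtain ⟨w, hw1, hw2⟩ := hsep p
        exact ⟨w, by rwa [Walk.support_reverse, List.mem_reverse], hw2⟩
      obtain ⟨c, d, hcd, hdS, hdsup, hav⟩ := exists_boundary p.reverse hvS hrev
      have hdz : d = z := by
        by_contra hd
        rw [Walk.support_reverse, List.mem_reverse] at hdsup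
        exact hp d hdsup ⟨hdS, hd⟩
      exact ⟨c, (hdz ▸ hcd).symm, hav⟩
  -- vertices on the two sides are distinct and non-adjacent
  have nemix : ∀ {a b : V}, Avoid G u S a → Avoid G v S b → a ≠ b := by
    rintro a b ⟨pa, hpa⟩ ⟨pb, hpb⟩ rfl
    obtain ⟨w, hw1, hw2⟩ := hsep (pa.append pb.reverse)
    rw [Walk.support_append, List.mem_append] at hw1
    rcases hw1 with h | h
    · exact hpa w h hw2
    · have := List.mem_of_mem_tail h
      rw [Walk.support_reverse, List.mem_reverse] at this
      exact hpb w this hw2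
  have noadj : ∀ {a b : V}, Avoid G u S a → Avoid G v S b → ¬ G.Adj a b := by
    rintro a b ⟨pa, hpa⟩ ⟨pb, hpb⟩ hab
    obtain ⟨w, hw1, hw2⟩ := hsep (pa.append (Walk.cons hab pb.reverse))
    rw [Walk.support_append, List.mem_append] at hw1
    rcases hw1 with h | h
    · exact hpa w h hw2
    · have h2 := List.mem_of_mem_tail h
      rw [Walk.support_cons, List.mem_cons] at h2
      rcases h2 with rfl | h2
      · exact hpa w pa.end_mem_support hw2
      · rw [Walk.support_reverse, List.mem_reverse] at h2
        exact hpb w h2 hw2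
  -- a good walk through each side
  have goodwalk : ∀ r : V, (∃ c, G.Adj x c ∧ Avoid G r S c) →
      (∃ c', G.Adj y c' ∧ Avoid G r S c') →
      ∃ p : G.Walk x y, ∀ w ∈ p.support, w = x ∨ w = y ∨ Avoid G r S w := by
    rintro r ⟨c, hxc, pc, hpc⟩ ⟨c', hyc', pc', hpc'⟩
    refine ⟨Walk.cons hxc ((pc.reverse.append pc').concat hyc'.symm), ?_⟩
    intro w hw
    rw [Walk.support_cons, List.mem_cons] at hw
    rcases hw with rfl | hw
    · exact Or.inl rfl
    rw [Walk.support_concat, List.mem_append,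
      List.mem_singleton] at hw
    rcases hw with hw | rfl
    · right; right
      rw [Walk.support_append, List.mem_append] at hw
      rcases hw with hw | hw
      · rw [Walk.support_reverse, List.mem_reverse] at hw
        exact avoid_of_mem_support hpc hw
      · exact avoid_of_mem_support hpc' (List.mem_of_mem_tail hw)
    · exact Or.inr (Or.inl rfl)
  -- shortest good paths on each side
  obtain ⟨pU, pUpath, goodU, shortU⟩ :=
    exists_shortest (goodwalk u (key x hx).1 (key y hy).1)
  obtain ⟨pV, pVpath, goodV, shortV⟩ :=
    exists_shortest (goodwalk v (key x hx).2 (key y hy).2)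
  -- lengths are at least 2
  have len2 : ∀ (p : G.Walk x y), 2 ≤ p.length := by
    intro p
    have h0 : p.length ≠ 0 := fun h => hxy (p.eq_of_length_eq_zero h)
    have h1 : p.length ≠ 1 := by
      intro h
      have h2 := p.adj_getVert_succ (i := 0) (by omega)
      rw [p.getVert_zero] at h2
      rw [show (0 + 1 : ℕ) = p.length by omega, p.getVert_length] at h2
      exact hxy' h2
    omega
  have hsU2 : 2 ≤ pU.length := len2 pU
  have hsV2 : 2 ≤ pV.length := len2 pV
  set n := pU.length + pV.length with hn
  have classifyU : ∀ i, 1 ≤ i → i ≤ pU.length - 1 → Avoid G u S (pU.getVert i) := by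
    intro i h1 h2
    rcases goodU _ (getVert_mem_support pU i) with h | h | h
    · exfalso
      have := getVert_injective pUpath i 0 (by omega) (by omega)
        (by rw [pU.getVert_zero]; exact h)
      omega
    · exfalso
      have := getVert_injective pUpath i pU.length (by omega) le_rfl
        (by rw [pU.getVert_length]; exact h)
      omega
    · exact h
  have classifyV : ∀ i, 1 ≤ i → i ≤ pV.length - 1 → Avoid G v S (pV.getVert i) := by
    intro i h1 h2
    rcases goodV _ (getVert_mem_support pV i) with h | h | h
    · exfalso
      have := getVert_injective pVpath i 0 (by omega) (by omega)
        (by rw [pV.getVert_zero]; exact h)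
      omega
    · exfalso
      have := getVert_injective pVpath i pV.length (by omega) le_rfl
        (by rw [pV.getVert_length]; exact h)
      omega
    · exact h
  set g : ℕ → V := fun i => if i ≤ pU.length then pU.getVert i else pV.getVert (n - i)
    with hgdef
  have hgU : ∀ i, i ≤ pU.length → g i = pU.getVert i := by
    intro i hi
    rw [hgdef]; simp only [if_pos hi]
  have hgV : ∀ i, pU.length ≤ i → g i = pV.getVert (n - i) := by
    intro i hi
    rcases eq_or_lt_of_le hi with rfl | hlt
    · rw [hgdef]
      simp only [if_pos le_rfl]
      rw [pU.getVert_length, show n - pU.length = pV.length by omega, pV.getVert_length]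
    · rw [hgdef]; simp only [if_neg (by omega : ¬ i ≤ pU.length)]
  have hg0 : g 0 = x := by rw [hgU 0 (by omega), pU.getVert_zero]
  -- injectivity
  have claim : ∀ i j, i < j → j < n → g i ≠ g j := by
    intro i j hij hj hne
    rcases le_or_gt j pU.length with hjU | hjU
    · rw [hgU i (by omega), hgU j hjU] at hne
      have := getVert_injective pUpath i j (by omega) hjU hne
      omega
    · rcases le_or_gt pU.length i with hiU | hiU
      · rw [hgV i hiU, hgV j (by omega)] at hne
        have := getVert_injective pVpath (n - i) (n - j) (by omega) (by omega) hne
        omega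
      · have hjV : Avoid G v S (pV.getVert (n - j)) := classifyV (n - j) (by omega) (by omega)
        rw [hgV j (by omega)] at hne
        rcases Nat.eq_zero_or_pos i with rfl | hi0
        · rw [hg0] at hne
          exact hjV.notMem (hne ▸ hx)
        · rw [hgU i (by omega)] at hne
          exact nemix (classifyU i (by omega) (by omega)) hjV hne
  have hinj : ∀ i j, i < n → j < n → g i = g j → i = j := by
    intro i j hi hj hij
    rcases lt_trichotomy i j with h | h | h
    · exact absurd hij (claim i j h hj)
    · exact h
    · exact absurd hij.symm (claim j i h hi)
  -- adjacency of consecutive vertices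
  have hstep : ∀ i, i + 1 < n → G.Adj (g i) (g (i + 1)) := by
    intro i hi
    rcases le_or_gt (i + 1) pU.length with h | h
    · rw [hgU i (by omega), hgU (i + 1) h]
      exact pU.adj_getVert_succ (by omega)
    · rw [hgV i (by omega), hgV (i + 1) (by omega)]
      have h2 := pV.adj_getVert_succ (i := n - (i + 1)) (by omega)
      rw [show n - (i + 1) + 1 = n - i by omega] at h2
      exact h2.symm
  have hwrap : G.Adj (g (n - 1)) (g 0) := by
    rw [hg0, hgV (n - 1) (by omega), show n - (n - 1) = 1 by omega]
    have h2 := pV.adj_getVert_succ (i := 0) (by omega)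
    rw [pV.getVert_zero] at h2
    exact h2.symm
  -- non-adjacency of non-consecutive vertices
  have hback : ∀ i j, i < j → j < n → G.Adj (g i) (g j) →
      j = i + 1 ∨ (i = 0 ∧ j = n - 1) := by
    intro i j hij hj hadj
    by_contra hcon
    push_neg at hcon
    obtain ⟨h1, h2⟩ := hcon
    rcases le_or_gt j pU.length with hjU | hjU
    · rw [hgU i (by omega), hgU j hjU] at hadj
      exact shortU i j (by omega) hjU hadj
    · rcases le_or_gt pU.length i with hiU | hiU
      · rw [hgV i hiU, hgV j (by omega)] at hadj
        exact shortV (n - j) (n - i) (by omega) (by omega) hadj.symm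
      · have hjV : Avoid G v S (pV.getVert (n - j)) := classifyV (n - j) (by omega) (by omega)
        rw [hgV j (by omega)] at hadj
        rcases Nat.eq_zero_or_pos i with rfl | hi0
        · rw [hg0] at hadj
          have hadj' : G.Adj (pV.getVert 0) (pV.getVert (n - j)) := by
            rw [pV.getVert_zero]; exact hadj
          rcases Nat.lt_or_ge 1 (n - j) with hgt | hle
          · exact shortV 0 (n - j) (by omega) (by omega) hadj'
          · exact h2 rfl (by omega)
        · rw [hgU i (by omega)] at hadj
          exact noadj (classifyU i (by omega) (by omega)) hjV hadj
  -- build the induced cycle and contradict chordality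
  refine hch n (by omega) ⟨⟨fun i => g i.val, ?_⟩, ?_⟩
  · intro a b hab
    exact Fin.ext (hinj a.val b.val a.isLt b.isLt hab)
  · intro a b
    show (SimpleGraph.cycleGraph n).Adj a b ↔ G.Adj (g a.val) (g b.val)
    rw [SimpleGraph.cycleGraph_adj']
    have h2n : 2 ≤ n := by omega
    constructor
    · rintro (h | h)
      · rcases (fin_sub_val_one h2n a b).mp h with h' | ⟨h1', h2'⟩
        · rw [h']
          exact (hstep b.val (by omega)).symm
        · rw [h1', h2']
          exact hwrap.symm
      · rcases (fin_sub_val_one h2n b a).mp h with h' | ⟨h1', h2'⟩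
        · rw [h']
          exact hstep a.val (by omega)
        · rw [h1', h2']
          exact hwrap
    · intro h
      have hne : a.val ≠ b.val := by
        intro he
        rw [show a = b from Fin.ext he] at h
        exact G.irrefl h
      rcases Nat.lt_or_ge a.val b.val with hab | hab
      · rcases hback a.val b.val hab b.isLt h with h1 | ⟨h1, h2⟩
        · right
          exact (fin_sub_val_one h2n b a).mpr (Or.inl h1)
        · left
          exact (fin_sub_val_one h2n a b).mpr (Or.inr ⟨h2, h1⟩)
      · rcases hback b.val a.val (by omega) a.isLt h.symm with h1 | ⟨h1, h2⟩
        · left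
          exact (fin_sub_val_one h2n a b).mpr (Or.inl h1)
        · right
          exact (fin_sub_val_one h2n b a).mpr (Or.inr ⟨h2, h1⟩)

end StrictlyChordalProof

/-- In a strictly chordal graph, any two vertices of a minimal vertex separator are true
twins. -/
theorem stmt_10 {V : Type*} (G : SimpleGraph V) (hsc : StrictlyChordal G) (S : Set V)
    (hS : IsMinimalVertexSeparator G S) :
    ∀ x ∈ S, ∀ y ∈ S, insert x (G.neighborSet x) = insert y (G.neighborSet y) := by
  intro x hx y hy
  by_cases hxy : x = y
  · rw [hxy]
  obtain ⟨u, v, hUV⟩ := hS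
  have hadj : G.Adj x y := StrictlyChordalProof.clique_of_minsep hsc.1 hUV hx hy hxy
  have incl : ∀ a ∈ S, ∀ b ∈ S, G.Adj a b →
      insert a (G.neighborSet a) ⊆ insert b (G.neighborSet b) := by
    intro a ha b hb hab z hz
    rw [Set.mem_insert_iff] at hz ⊢
    rcases hz with rfl | hz
    · exact Or.inr hab.symm
    have hz' : G.Adj a z := hz
    by_cases hzb : z = b
    · exact Or.inl hzb
    by_cases hbz : G.Adj b z
    · exact Or.inr hbz
    exfalso
    have hT := StrictlyChordalProof.nbhd_minimal_separator (G := G) (z := z) (y := b)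
      hzb (fun h => hbz h.symm)
    set T : Set V := {w | G.Adj b w ∧ ∃ c,
      StrictlyChordalProof.Avoid G z (G.neighborSet b ∪ {b}) c ∧ G.Adj c w} with hTdef
    have hzA : z ∉ G.neighborSet b ∪ {b} := by
      rintro (h | h)
      · exact hbz h
      · exact hzb h
    have haT : a ∈ T := ⟨hab.symm, z, StrictlyChordalProof.avoid_refl hzA, hz'.symm⟩
    have hbT : b ∉ T := hT.2.2.2.1
    have hne : S ≠ T := fun h => hbT (h ▸ hb)
    have hdis := hsc.2 S T ⟨u, v, hUV⟩ ⟨z, b, hT⟩ hne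
    exact Set.disjoint_left.mp hdis ha haT
  exact Set.Subset.antisymm (incl x hx y hy hadj) (incl y hy x hx hadj.symm)
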